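/- Let m > 0, n ≥ 1, and let U ⊆ ℂⁿ be open, with holomorphic and antiholomorphic Wirtinger derivatives ∂_{a_j}, ∂_{ā_j} in the coordinates a = (a₁, …, aₙ). Let C₁, D₁ : U → Matrix n n ℂ be twice continuously differentiable and let G : U → Matrix n n ℂ be continuously differentiable with G(a) invertible and Hermitian (G(a)† = G(a)) for all a ∈ U. Denote by E_j the diagonal matrix unit with 1 in entry (j, j), and by Ḡ the entrywise complex conjugate of G. Assume for all j, k: (i) ∂_{ā_j} C₁ = (m/2)[E_j, G] G⁻¹; (ii) ∂_{a_j} D₁ = (m/2)[E_j, Ḡ] Ḡ⁻¹; (iii) ∂_{a_j}(C₁)_{kk} = (m/2)([E_j, C₁] C₁)_{kk}; (iv) ∂_{ā_j}(D₁)_{kk} = (m/2)([E_j, D₁] D₁)_{kk}. Then the 1-form Ω = (m/2) ∑_j ((C₁)_{jj} da_j + (D₁)_{jj} dā_j) is closed; explicitly, for all j, k: ∂_{a_k}(C₁)_{jj} = ∂_{a_j}(C₁)_{kk}, ∂_{ā_k}(D₁)_{jj} = ∂_{ā_j}(D₁)_{kk}, and ∂_{ā_k}(C₁)_{jj} = ∂_{a_j}(D₁)_{kk}.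 -/

import Mathlib

open Matrix Complex

lemma comm_entry {n : ℕ} (M : Matrix (Fin n) (Fin n) ℂ) (j k : Fin n) :
    (((Matrix.single j j 1 * M - M * Matrix.single j j 1) * M : Matrix (Fin n) (Fin n) ℂ)) k k
      = (((Matrix.single k k 1 * M - M * Matrix.single k k 1) * M : Matrix (Fin n) (Fin n) ℂ)) j j := by
  have h : ∀ p q : Fin n,
      (((Matrix.single p p 1 * M - M * Matrix.single p p 1) * M : Matrix (Fin n) (Fin n) ℂ)) q q
        = (if q = p then (M * M) p q else 0) - M q p * M p q := by
    intro p q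
    rw [sub_mul, Matrix.sub_apply, mul_assoc]
    congr 1
    · by_cases h : q = p
      · subst h; simp [Matrix.mul_apply, Matrix.single, ite_and]
      · have h2 : ¬ p = q := fun e => h e.symm
        simp [Matrix.mul_apply, Matrix.single, ite_and, h, h2]
    · rw [mul_assoc]
      simp [Matrix.mul_apply, Matrix.single, Finset.sum_ite_eq, ite_and]
  rw [h, h]
  by_cases hjk : j = k
  · subst hjk; ring
  · simp [hjk, Ne.symm hjk]; ring

lemma comm_inv_entry {n : ℕ} (A : Matrix (Fin n) (Fin n) ℂ) (hA : IsUnit A) (p q : Fin n) :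
    (((Matrix.single p p 1 * A - A * Matrix.single p p 1) * A⁻¹ : Matrix (Fin n) (Fin n) ℂ)) q q
      = (if q = p then 1 else 0) - A q p * A⁻¹ p q := by
  rw [sub_mul, Matrix.sub_apply, mul_assoc,
    Matrix.mul_nonsing_inv A ((Matrix.isUnit_iff_isUnit_det A).mp hA)]
  congr 1
  · by_cases h : q = p
    · subst h; simp [Matrix.single]
    · have h2 : ¬ p = q := fun e => h e.symm
      simp [Matrix.single, h, h2]
  · rw [mul_assoc]
    simp [Matrix.mul_apply, Matrix.single, ite_and]

lemma G_entry {n : ℕ} (A : Matrix (Fin n) (Fin n) ℂ) (hA : IsUnit A) (hH : Aᴴ = A) (j k : Fin n) :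
    (((Matrix.single k k 1 * A - A * Matrix.single k k 1) * A⁻¹ : Matrix (Fin n) (Fin n) ℂ)) j j
      = (((Matrix.single j j 1 * A.map (starRingEnd ℂ) - A.map (starRingEnd ℂ) * Matrix.single j j 1)
          * (A.map (starRingEnd ℂ))⁻¹ : Matrix (Fin n) (Fin n) ℂ)) k k := by
  have hmap : A.map (starRingEnd ℂ) = Aᵀ := by
    have h1 := congrArg Matrix.transpose hH
    rw [Matrix.conjTranspose, Matrix.transpose_map, Matrix.transpose_transpose] at h1
    exact h1
  have hAT : IsUnit Aᵀ := by
    rw [Matrix.isUnit_iff_isUnit_det, Matrix.det_transpose]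
    exact (Matrix.isUnit_iff_isUnit_det A).mp hA
  rw [hmap, comm_inv_entry A hA k j, comm_inv_entry Aᵀ hAT j k,
    ← Matrix.transpose_nonsing_inv]
  simp [Matrix.transpose_apply, eq_comm]

/-- Holomorphic Wirtinger derivative `∂_{a_j} F = (1/2)(∂_{x_j} − i ∂_{y_j})F` of a function
`F : ℂⁿ → ℂ`, computed from the real Fréchet derivative. -/
noncomputable def wD {n : ℕ} (j : Fin n) (F : (Fin n → ℂ) → ℂ) (a : Fin n → ℂ) : ℂ :=
  (1 / 2 : ℂ) * (fderiv ℝ F a (Pi.single j 1) - Complex.I * fderiv ℝ F a (Pi.single j Complex.I))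

/-- Antiholomorphic Wirtinger derivative `∂_{ā_j} F = (1/2)(∂_{x_j} + i ∂_{y_j})F`. -/
noncomputable def wDbar {n : ℕ} (j : Fin n) (F : (Fin n → ℂ) → ℂ) (a : Fin n → ℂ) : ℂ :=
  (1 / 2 : ℂ) * (fderiv ℝ F a (Pi.single j 1) + Complex.I * fderiv ℝ F a (Pi.single j Complex.I))

/-- Under the isomonodromic deformation equations (i)–(iv), the 1-form
`Ω = (m/2) ∑_j ((C₁)_{jj} da_j + (D₁)_{jj} dā_j)` is closed; explicitly the three
families of mixed-derivative symmetries hold. -/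
theorem omega_form_closed
    (m : ℝ) (hm : 0 < m) (n : ℕ) (hn : 1 ≤ n)
    (U : Set (Fin n → ℂ)) (hU : IsOpen U)
    (C₁ D₁ G : (Fin n → ℂ) → Matrix (Fin n) (Fin n) ℂ)
    (hC₁ : ∀ p q : Fin n, ContDiffOn ℝ 2 (fun a => C₁ a p q) U)
    (hD₁ : ∀ p q : Fin n, ContDiffOn ℝ 2 (fun a => D₁ a p q) U)
    (hG : ∀ p q : Fin n, ContDiffOn ℝ 1 (fun a => G a p q) U)
    (hGunit : ∀ a ∈ U, IsUnit (G a))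
    (hGherm : ∀ a ∈ U, (G a)ᴴ = G a)
    (hi : ∀ a ∈ U, ∀ j : Fin n, ∀ p q : Fin n,
      wDbar j (fun b => C₁ b p q) a
        = (((m / 2 : ℂ) • ((Matrix.single j j 1 * G a - G a * Matrix.single j j 1) * (G a)⁻¹)) : Matrix (Fin n) (Fin n) ℂ) p q)
    (hii : ∀ a ∈ U, ∀ j : Fin n, ∀ p q : Fin n,
      wD j (fun b => D₁ b p q) a
        = (((m / 2 : ℂ) • ((Matrix.single j j 1 * (G a).map (starRingEnd ℂ)
            - (G a).map (starRingEnd ℂ) * Matrix.single j j 1) * ((G a).map (starRingEnd ℂ))⁻¹)) : Matrix (Fin n) (Fin n) ℂ) p q)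
    (hiii : ∀ a ∈ U, ∀ j k : Fin n,
      wD j (fun b => C₁ b k k) a
        = (((m / 2 : ℂ) • ((Matrix.single j j 1 * C₁ a - C₁ a * Matrix.single j j 1) * C₁ a)) : Matrix (Fin n) (Fin n) ℂ) k k)
    (hiv : ∀ a ∈ U, ∀ j k : Fin n,
      wDbar j (fun b => D₁ b k k) a
        = (((m / 2 : ℂ) • ((Matrix.single j j 1 * D₁ a - D₁ a * Matrix.single j j 1) * D₁ a)) : Matrix (Fin n) (Fin n) ℂ) k k) :
    ∀ a ∈ U, ∀ j k : Fin n,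
      wD k (fun b => C₁ b j j) a = wD j (fun b => C₁ b k k) a ∧
      wDbar k (fun b => D₁ b j j) a = wDbar j (fun b => D₁ b k k) a ∧
      wDbar k (fun b => C₁ b j j) a = wD j (fun b => D₁ b k k) a := by
  intro a ha j k
  refine ⟨?_, ?_, ?_⟩
  · rw [hiii a ha k j, hiii a ha j k, Matrix.smul_apply, Matrix.smul_apply,
      comm_entry (C₁ a) k j]
  · rw [hiv a ha k j, hiv a ha j k, Matrix.smul_apply, Matrix.smul_apply,
      comm_entry (D₁ a) k j]
  · rw [hi a ha k j j, hii a ha j k k, Matrix.smul_apply, Matrix.smul_apply,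
      G_entry (G a) (hGunit a ha) (hGherm a ha) j k]
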